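/- Let m(x) = x₁x₂⋯x_k be the monomial in the first k variables on 𝔽₂^n. The number of k-dimensional linear subspaces U of 𝔽₂^n with ∑_{x∈U} m(x) ≠ 0 equals 2^{k(n−k)}. -/
import Mathlib

/-- Sum of a function over a (finite) set of points. -/
noncomputable def setSum {α β : Type*} [Fintype α] [AddCommMonoid β]
    (S : Set α) (F : α → β) : β :=
  ∑ x ∈ (Set.toFinite S).toFinset, F x

namespace Stmt10Aux

/-- The monomial x₁⋯x_k. -/
def mon (n k : ℕ) (x : Fin n → ZMod 2) : ZMod 2 :=
  ∏ i ∈ Finset.univ.filter (fun i : Fin n => (i : ℕ) < k), x i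

lemma mon_eq {n k : ℕ} (hk : k ≤ n) (x : Fin n → ZMod 2) :
    mon n k x = ∏ j : Fin k, x (Fin.castLE hk j) := by
  unfold mon
  rw [show (Finset.univ.filter (fun i : Fin n => (i : ℕ) < k))
      = Finset.univ.map ⟨Fin.castLE hk, Fin.castLE_injective hk⟩ by
    ext i
    simp only [Finset.mem_filter, Finset.mem_univ, true_and, Finset.mem_map,
      Function.Embedding.coeFn_mk]
    constructor
    · intro h; exact ⟨⟨i, h⟩, rfl⟩
    · rintro ⟨j, rfl⟩; exact j.isLt]
  rw [Finset.prod_map]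
  rfl

/-- If U contains a nonzero vector vanishing on the first k coordinates,
the sum of the monomial over U is 0. -/
lemma sum_mon_zero {n k : ℕ} (U : Submodule (ZMod 2) (Fin n → ZMod 2))
    (z : Fin n → ZMod 2) (hz : z ∈ U) (hz0 : z ≠ 0)
    (hzk : ∀ i : Fin n, (i : ℕ) < k → z i = 0) :
    ∑ x ∈ (Set.toFinite (U : Set (Fin n → ZMod 2))).toFinset, mon n k x = 0 := by
  have g_mem : ∀ a ∈ (Set.toFinite (U : Set (Fin n → ZMod 2))).toFinset,
      a + z ∈ (Set.toFinite (U : Set (Fin n → ZMod 2))).toFinset := by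
    intro a ha
    rw [Set.Finite.mem_toFinset] at ha ⊢
    exact U.add_mem ha hz
  refine Finset.sum_involution (fun a _ => a + z) ?_ ?_ g_mem ?_
  · intro a _
    have : mon n k (a + z) = mon n k a := by
      unfold mon
      refine Finset.prod_congr rfl ?_
      intro i hi
      simp only [Finset.mem_filter] at hi
      simp [hzk i hi.2]
    rw [this]
    have : mon n k a + mon n k a = 2 * mon n k a := by ring
    rw [this]
    simp [show (2 : ZMod 2) = 0 from rfl]
  · intro a _ _
    intro h
    apply hz0
    have := congrArg (fun w => w - a) h
    simpa using this
  · intro a _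
    show a + z + z = a
    have : a + z + z = a + (z + z) := by ring
    rw [this, show z + z = 0 from by
      funext i
      have : z i + z i = 2 * z i := by ring
      simp [Pi.add_apply, this, show (2 : ZMod 2) = 0 from rfl]]
    simp

/-- If the projection to the first k coordinates is a bijection from U onto 𝔽₂ᵏ,
the monomial sum is 1. -/
lemma sum_mon_one {n k : ℕ} (hk : k ≤ n) (U : Submodule (ZMod 2) (Fin n → ZMod 2))
    (hinj : ∀ x ∈ U, ∀ x' ∈ U,
      (∀ j : Fin k, x (Fin.castLE hk j) = x' (Fin.castLE hk j)) → x = x')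
    (hsurj : ∀ y : Fin k → ZMod 2, ∃ x ∈ U, ∀ j : Fin k, x (Fin.castLE hk j) = y j) :
    ∑ x ∈ (Set.toFinite (U : Set (Fin n → ZMod 2))).toFinset, mon n k x = 1 := by
  have key : ∑ x ∈ (Set.toFinite (U : Set (Fin n → ZMod 2))).toFinset, mon n k x
      = ∑ y : Fin k → ZMod 2, ∏ j : Fin k, y j := by
    refine Finset.sum_bij (fun x _ => fun j : Fin k => x (Fin.castLE hk j)) ?_ ?_ ?_ ?_
    · intro a _; exact Finset.mem_univ _
    · intro a ha b hb h
      rw [Set.Finite.mem_toFinset] at ha hb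
      exact hinj a ha b hb (fun j => congrFun h j)
    · intro y _
      obtain ⟨x, hx, hxy⟩ := hsurj y
      exact ⟨x, (Set.Finite.mem_toFinset _).2 hx, funext hxy⟩
    · intro a _
      exact mon_eq hk a
  rw [key]
  rw [Finset.sum_eq_single (fun _ => (1 : ZMod 2))]
  · simp
  · intro y _ hy
    obtain ⟨j, hj⟩ : ∃ j, y j ≠ 1 := by
      by_contra hcon
      push_neg at hcon
      exact hy (funext hcon)
    have h0 : ∀ a : ZMod 2, a ≠ 1 → a = 0 := by decide
    exact Finset.prod_eq_zero (Finset.mem_univ j) (h0 _ hj)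
  · intro h
    exact absurd (Finset.mem_univ _) h

/-- The graph map associated to a linear map g : 𝔽₂ᵏ → 𝔽₂^{n-k}. -/
def T {n k : ℕ} (hk : k ≤ n)
    (g : (Fin k → ZMod 2) →ₗ[ZMod 2] (Fin (n - k) → ZMod 2)) :
    (Fin k → ZMod 2) →ₗ[ZMod 2] (Fin n → ZMod 2) :=
  LinearMap.pi (fun i : Fin n =>
    if h : (i : ℕ) < k then LinearMap.proj (⟨(i : ℕ), h⟩ : Fin k)
    else (LinearMap.proj (⟨(i : ℕ) - k, by omega⟩ : Fin (n - k))).comp g)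

lemma T_apply_lt {n k : ℕ} (hk : k ≤ n)
    (g : (Fin k → ZMod 2) →ₗ[ZMod 2] (Fin (n - k) → ZMod 2))
    (y : Fin k → ZMod 2) (i : Fin n) (h : (i : ℕ) < k) :
    T hk g y i = y ⟨(i : ℕ), h⟩ := by
  simp [T, LinearMap.pi_apply, dif_pos h]

lemma T_apply_ge {n k : ℕ} (hk : k ≤ n)
    (g : (Fin k → ZMod 2) →ₗ[ZMod 2] (Fin (n - k) → ZMod 2))
    (y : Fin k → ZMod 2) (i : Fin n) (h : ¬ (i : ℕ) < k) :
    T hk g y i = g y ⟨(i : ℕ) - k, by omega⟩ := by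
  simp [T, LinearMap.pi_apply, dif_neg h]

lemma T_section {n k : ℕ} (hk : k ≤ n)
    (g : (Fin k → ZMod 2) →ₗ[ZMod 2] (Fin (n - k) → ZMod 2))
    (y : Fin k → ZMod 2) (j : Fin k) :
    T hk g y (Fin.castLE hk j) = y j := by
  rw [T_apply_lt hk g y _ (by simp [Fin.castLE])]
  exact congrArg y (Fin.ext rfl)

lemma T_injective {n k : ℕ} (hk : k ≤ n)
    (g : (Fin k → ZMod 2) →ₗ[ZMod 2] (Fin (n - k) → ZMod 2)) :
    Function.Injective (T hk g) := by
  intro a b h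
  funext j
  rw [← T_section hk g a j, ← T_section hk g b j, h]

end Stmt10Aux

open Stmt10Aux in
theorem stmt_10 (n k : ℕ) (hk : k ≤ n) :
    Set.ncard {U : Submodule (ZMod 2) (Fin n → ZMod 2) |
        Module.finrank (ZMod 2) U = k ∧
        setSum (U : Set (Fin n → ZMod 2))
          (fun x => ∏ i ∈ Finset.univ.filter (fun i : Fin n => (i : ℕ) < k), x i) ≠ 0} =
      2 ^ (k * (n - k)) := by
  classical
  set G : ((Fin k → ZMod 2) →ₗ[ZMod 2] (Fin (n - k) → ZMod 2)) →
      Submodule (ZMod 2) (Fin n → ZMod 2) := fun g => LinearMap.range (T hk g) with hG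
  -- range of T hk g determines g
  have hGinj : Function.Injective G := by
    intro g₁ g₂ h
    have hTeq : ∀ y, T hk g₁ y = T hk g₂ y := by
      intro y
      have hmem : T hk g₁ y ∈ G g₁ := ⟨y, rfl⟩
      rw [h] at hmem
      obtain ⟨y', hy'⟩ := hmem
      have : y' = y := by
        funext j
        rw [← T_section hk g₂ y' j, hy', T_section hk g₁ y j]
      rw [← hy', this]
    refine LinearMap.ext fun y => funext fun j => ?_
    have h1 := T_apply_ge hk g₁ y ⟨k + (j : ℕ), by omega⟩ (by simp)
    have h2 := T_apply_ge hk g₂ y ⟨k + (j : ℕ), by omega⟩ (by simp)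
    have : (⟨k + (j : ℕ) - k, by omega⟩ : Fin (n - k)) = j := by
      apply Fin.ext; simp
    rw [this] at h1 h2
    rw [← h1, ← h2, hTeq y]
  -- the set equals the range of G
  have hset : {U : Submodule (ZMod 2) (Fin n → ZMod 2) |
      Module.finrank (ZMod 2) U = k ∧
      setSum (U : Set (Fin n → ZMod 2))
        (fun x => ∏ i ∈ Finset.univ.filter (fun i : Fin n => (i : ℕ) < k), x i) ≠ 0}
      = Set.range G := by
    ext U
    simp only [Set.mem_setOf_eq, Set.mem_range]
    constructor
    · rintro ⟨hrank, hsum⟩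
      -- the projection restricted to U is injective
      have hinj : ∀ x ∈ U, ∀ x' ∈ U,
          (∀ j : Fin k, x (Fin.castLE hk j) = x' (Fin.castLE hk j)) → x = x' := by
        intro x hx x' hx' hproj
        by_contra hne
        apply hsum
        have : setSum (U : Set (Fin n → ZMod 2))
            (fun x => ∏ i ∈ Finset.univ.filter (fun i : Fin n => (i : ℕ) < k), x i)
            = ∑ x ∈ (Set.toFinite (U : Set (Fin n → ZMod 2))).toFinset, mon n k x := rfl
        rw [this]
        refine sum_mon_zero U (x - x') (U.sub_mem hx hx') (by
          intro h0
          exact hne (by simpa [sub_eq_zero] using h0)) ?_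
        intro i hi
        have : x i = x' i := by
          have := hproj ⟨(i : ℕ), hi⟩
          simpa [Fin.castLE] using this
        simp [Pi.sub_apply, this]
      -- the restricted projection as a linear map
      set L : U →ₗ[ZMod 2] (Fin k → ZMod 2) :=
        (LinearMap.funLeft (ZMod 2) (ZMod 2) (Fin.castLE hk)).comp U.subtype with hL
      have hLinj : Function.Injective L := by
        intro u v huv
        apply Subtype.ext
        exact hinj u u.2 v v.2 (fun j => congrFun huv j)
      have hrk : Module.finrank (ZMod 2) U = Module.finrank (ZMod 2) (Fin k → ZMod 2) := by
        rw [hrank, Module.finrank_fin_fun]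
      have hLsurj : Function.Surjective L :=
        (LinearMap.injective_iff_surjective_of_finrank_eq_finrank hrk).mp hLinj
      set e : U ≃ₗ[ZMod 2] (Fin k → ZMod 2) :=
        LinearEquiv.ofBijective L ⟨hLinj, hLsurj⟩ with he
      set q : (Fin n → ZMod 2) →ₗ[ZMod 2] (Fin (n - k) → ZMod 2) :=
        LinearMap.funLeft (ZMod 2) (ZMod 2)
          (fun j : Fin (n - k) => (⟨k + (j : ℕ), by omega⟩ : Fin n)) with hq
      refine ⟨(q.comp U.subtype).comp e.symm.toLinearMap, ?_⟩
      set g := (q.comp U.subtype).comp e.symm.toLinearMap with hg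
      have hTg : ∀ y : Fin k → ZMod 2, T hk g y = (e.symm y : Fin n → ZMod 2) := by
        intro y
        funext i
        by_cases h : (i : ℕ) < k
        · rw [T_apply_lt hk g y i h]
          have : L (e.symm y) = y := by
            have := e.apply_symm_apply y
            exact this
          have := congrFun this ⟨(i : ℕ), h⟩
          simp only [hL, LinearMap.comp_apply, LinearMap.funLeft_apply,
            Submodule.subtype_apply] at this
          rw [← this]
          congr 1
        · rw [T_apply_ge hk g y i h]
          simp only [hg, LinearMap.comp_apply, hq, LinearMap.funLeft_apply,
            Submodule.subtype_apply, LinearEquiv.coe_coe]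
          exact congrArg (fun w : Fin n => (e.symm y : Fin n → ZMod 2) w)
            (Fin.ext (by simp; omega))
      simp only [hG]
      apply le_antisymm
      · rintro x ⟨y, rfl⟩
        rw [hTg y]
        exact (e.symm y).2
      · intro x hx
        exact ⟨e ⟨x, hx⟩, by rw [hTg, e.symm_apply_apply]⟩
    · rintro ⟨g, rfl⟩
      constructor
      · show Module.finrank (ZMod 2) (LinearMap.range (T hk g)) = k
        rw [LinearMap.finrank_range_of_inj (T_injective hk g), Module.finrank_fin_fun]
      · have : setSum ((G g : Submodule (ZMod 2) (Fin n → ZMod 2)) : Set (Fin n → ZMod 2))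
            (fun x => ∏ i ∈ Finset.univ.filter (fun i : Fin n => (i : ℕ) < k), x i)
            = ∑ x ∈ (Set.toFinite ((G g : Submodule (ZMod 2) (Fin n → ZMod 2)) :
                Set (Fin n → ZMod 2))).toFinset, mon n k x := rfl
        rw [this, sum_mon_one hk (G g) ?_ ?_]
        · exact one_ne_zero
        · rintro x ⟨y, rfl⟩ x' ⟨y', rfl⟩ hproj
          have : y = y' := by
            funext j
            have := hproj j
            rwa [T_section, T_section] at this
          rw [this]
        · intro y
          exact ⟨T hk g y, ⟨y, rfl⟩, fun j => T_section hk g y j⟩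
  rw [hset, ← Nat.card_coe_set_eq, Nat.card_range_of_injective hGinj,
    Nat.card_congr (LinearMap.toMatrix (Pi.basisFun (ZMod 2) (Fin k))
      (Pi.basisFun (ZMod 2) (Fin (n - k)))).toEquiv]
  have h1 : Nat.card (Matrix (Fin (n - k)) (Fin k) (ZMod 2)) =
      Nat.card (Fin (n - k) → Fin k → ZMod 2) := rfl
  rw [h1, Nat.card_eq_fintype_card]
  simp only [Fintype.card_fun, ZMod.card, Fintype.card_fin]
  rw [← pow_mul, Nat.mul_comm]
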